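/- If Φ : 𝒦(κ) → 𝒦(κ) is a postprocessing function and ⟨C_δ : δ < κ⟩ is a weakly coherent C-sequence (for every α < κ, |{C_δ ∩ α : δ < κ}| < κ), then ⟨Φ(C_δ) : δ ∈ acc(κ)⟩ is weakly coherent as well: for every α < κ, |{Φ(C_δ) ∩ α : δ ∈ acc(κ)}| < κ. -/

import Mathlib

open Set Ordinal

noncomputable section

abbrev O : Type 1 := Ordinal.{0}

/-- `ssup A` is the strict supremum of a set of ordinals. -/
def ssup (A : Set O) : O := sSup ((· + 1) '' A)

/-- `acc⁺(A)`: accumulation points below the strict sup. -/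
def accP (A : Set O) : Set O := {α | α < ssup A ∧ 0 < α ∧ sSup (A ∩ Iio α) = α}

def accOf (A : Set O) : Set O := A ∩ accP A

def nacc (A : Set O) : Set O := A \ accOf A

def clOf (A : Set O) : Set O := A ∪ accP A

/-- order type of a set of ordinals -/
def otp (A : Set O) : Ordinal.{1} := Ordinal.type (Subrel ((· < ·) : O → O → Prop) (· ∈ A))

/-- lift a small ordinal one universe up -/
def olift (a : O) : Ordinal.{1} := Ordinal.lift.{1} a

/-- `suc_σ(A)`: elements of `A` whose index in `A` is `j+1` for some `j < σ`. -/
def sucSet (σ : Ordinal.{1}) (A : Set O) : Set O := {β | β ∈ A ∧ ∃ j < σ, otp (A ∩ Iio β) = j + 1}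

def UnbIn (A : Set O) (δ : O) : Prop := ∀ α < δ, ∃ β ∈ A, α < β ∧ β < δ

def IsClubIn (C : Set O) (δ : O) : Prop :=
  C ⊆ Iio δ ∧ UnbIn C δ ∧ ∀ α < δ, 0 < α → sSup (C ∩ Iio α) = α → α ∈ C

def IsStatIn (S : Set O) (δ : O) : Prop :=
  S ⊆ Iio δ ∧ ∀ D, IsClubIn D δ → (S ∩ D).Nonempty

def Ecof (κ : O) (lam : Cardinal.{0}) : Set O := {δ | δ < κ ∧ δ.cof = lam}

def PhiSup (B x : Set O) : Set O :=
  if sSup (x ∩ B) = sSup x then clOf (x ∩ B) else x \ Iio (sSup (x ∩ B))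

def PhiD (D x : Set O) : Set O :=
  if sSup (D ∩ Iio (sSup x)) = sSup x then
    {γ | ∃ η ∈ x, sInf D < η ∧ γ = sSup (D ∩ Iio η)}
  else x \ Iio (sSup (D ∩ Iio (sSup x)))

/-- `cf(δ)`-additive proper ideal on `δ` extending the bounded ideal. -/
def GoodIdeal (δ : O) (J : Set (Set O)) : Prop :=
  (∀ A B : Set O, A ⊆ B → B ∈ J → A ∈ J) ∧
  (Iio δ ∉ J) ∧
  (∀ B : Set O, B ⊆ Iio δ → sSup B < δ → B ∈ J) ∧
  (∀ ξ < (Ordinal.cof δ).ord, ∀ f : O → Set O, (∀ i < ξ, f i ∈ J) → (⋃ i ∈ Iio ξ, f i) ∈ J)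

/-- `𝒦(κ)`: nonempty closed bounded sets of ordinals whose supremum is not attained. -/
def Kset (κ : O) (x : Set O) : Prop :=
  x.Nonempty ∧ x ⊆ Iio κ ∧ accP x ⊆ x ∧ sSup x ∉ x

def Phif (f : O → Set O) (x : Set O) : Set O :=
  x ∪ ⋃ γ ∈ nacc x, f γ ∩ Ioo (sSup (x ∩ Iio γ)) γ

/-- postprocessing function -/
def IsPP (κ : O) (Φ : Set O → Set O) : Prop :=
  ∀ x, Kset κ x →
    IsClubIn (Φ x) (sSup x) ∧
    accOf (Φ x) ⊆ accOf x ∧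
    ∀ α ∈ accOf (Φ x), Φ x ∩ Iio α = Φ (x ∩ Iio α)

/-- Any infinite set of ordinals bounded by `α` has an accumulation point `≤ α`. -/
lemma exists_acc_of_infinite {t : Set O} {α : O} (ht : t ⊆ Iio α) (hinf : t.Infinite) :
    ∃ u ≤ α, (t ∩ Iio u).Infinite ∧ sSup (t ∩ Iio u) = u := by
  set W := {γ : O | (t ∩ Iio γ).Infinite} with hW
  have hαW : α ∈ W := by
    have h : t ∩ Iio α = t := Set.inter_eq_self_of_subset_left ht
    show (t ∩ Iio α).Infinite
    rw [h]; exact hinf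
  set u := sInf W with hu
  have huW : u ∈ W := csInf_mem ⟨α, hαW⟩
  refine ⟨u, csInf_le (OrderBot.bddBelow W) hαW, huW, ?_⟩
  apply le_antisymm (csSup_le' fun b hb => hb.2.le)
  by_contra hlt
  push_neg at hlt
  set s := sSup (t ∩ Iio u) with hs
  have hsW : s ∉ W := notMem_of_lt_csInf hlt (OrderBot.bddBelow W)
  have hfin : (t ∩ Iio s).Finite := Set.not_infinite.mp hsW
  have hsub : t ∩ Iio u ⊆ insert s (t ∩ Iio s) := by
    intro z hz
    rcases eq_or_lt_of_le (le_csSup ⟨u, fun b hb => hb.2.le⟩ hz) with h | h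
    · exact Set.mem_insert_iff.mpr (Or.inl h)
    · exact Set.mem_insert_iff.mpr (Or.inr ⟨hz.1, h⟩)
  exact huW (Set.Finite.subset (hfin.insert s) hsub)

/-- Key structural lemma: below `α`, a postprocessed club decomposes as the
image of an initial segment together with a finite set. -/
lemma key_decomp (Φ : Set O → Set O) (x : Set O) (δ α : O) (hαδ : α < δ)
    (hclub : IsClubIn (Φ x) δ) (hss : ssup (Φ x) = δ)
    (hcoh : ∀ γ ∈ accOf (Φ x), Φ x ∩ Iio γ = Φ (x ∩ Iio γ)) :
    ∃ β ≤ α, ∃ t : Set O, t.Finite ∧ t ⊆ Iio α ∧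
      Φ x ∩ Iio α = (if β = 0 then ∅ else Φ (x ∩ Iio β)) ∪ t := by
  obtain ⟨hsub, hunb, hcl⟩ := hclub
  by_cases hA : 0 < α ∧ sSup (Φ x ∩ Iio α) = α
  · have hαP : α ∈ accP (Φ x) := ⟨by rw [hss]; exact hαδ, hA.1, hA.2⟩
    have hαΦ : α ∈ Φ x := hcl α hαδ hA.1 hA.2
    refine ⟨α, le_refl α, ∅, Set.finite_empty, Set.empty_subset _, ?_⟩
    rw [if_neg hA.1.ne', Set.union_empty]
    exact hcoh α ⟨hαΦ, hαP⟩
  · set P := accP (Φ x) with hPdef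
    set β := sSup (P ∩ Iio α) with hβdef
    have hβα : β ≤ α := csSup_le' fun b hb => hb.2.le
    set t := (Φ x ∩ Iio α) \ Iio β with htdef
    have htsub : t ⊆ Iio α := fun z hz => hz.1.2
    have htfin : t.Finite := by
      by_contra hfin
      obtain ⟨u, huα, huinf, husup⟩ := exists_acc_of_infinite htsub hfin
      have hu0 : 0 < u := by
        obtain ⟨z, hz⟩ := huinf.nonempty
        exact lt_of_le_of_lt (by simp : (0:O) ≤ z) hz.2
      have hβu : β < u := by
        obtain ⟨z, hz⟩ := (huinf.diff (Set.finite_singleton β)).nonempty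
        have hzβ : β ≤ z := le_of_not_gt fun h => hz.1.1.2 h
        have hzne : z ≠ β := fun h => hz.2 (by simp [h])
        exact lt_of_le_of_lt (lt_of_le_of_ne hzβ (Ne.symm hzne)).le hz.1.2
      have hsupu : sSup (Φ x ∩ Iio u) = u := by
        apply le_antisymm (csSup_le' fun b hb => hb.2.le)
        calc u = sSup (t ∩ Iio u) := husup.symm
          _ ≤ sSup (Φ x ∩ Iio u) :=
            csSup_le_csSup ⟨u, fun b hb => hb.2.le⟩ huinf.nonempty
              (fun z hz => ⟨hz.1.1.1, hz.2⟩)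
      have huα' : u < α := by
        rcases lt_or_eq_of_le huα with h | h
        · exact h
        · exact absurd ⟨h ▸ hu0, h ▸ hsupu⟩ hA
      have huP : u ∈ P ∩ Iio α :=
        ⟨⟨by rw [hss]; exact huα'.trans hαδ, hu0, hsupu⟩, huα'⟩
      exact absurd (le_csSup ⟨α, fun b hb => hb.2.le⟩ huP) (not_le_of_gt hβu)
    by_cases hβ0 : β = 0
    · refine ⟨β, hβα, t, htfin, htsub, ?_⟩
      rw [if_pos hβ0, Set.empty_union]
      ext z
      simp [htdef, hβ0]
    · have hPne : (P ∩ Iio α).Nonempty := by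
        by_contra h
        apply hβ0
        rw [hβdef, Set.not_nonempty_iff_eq_empty.mp h, csSup_empty]
        rfl
      have hβδ : β < δ := lt_of_le_of_lt hβα hαδ
      have hβsup : sSup (Φ x ∩ Iio β) = β := by
        by_cases hmem : β ∈ P
        · exact hmem.2.2
        · apply le_antisymm (csSup_le' fun b hb => hb.2.le)
          by_contra hlt
          push_neg at hlt
          obtain ⟨p, hp, hsp⟩ := exists_lt_of_lt_csSup hPne hlt
          have hpβ : p ≤ β := le_csSup ⟨α, fun b hb => hb.2.le⟩ hp
          have hpβ' : p < β := lt_of_le_of_ne hpβ (fun h => hmem (h ▸ hp.1))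
          have hpΦ : p ∈ Φ x := hcl p (hp.2.trans hαδ) hp.1.2.1 hp.1.2.2
          exact absurd (le_csSup ⟨β, fun b hb => hb.2.le⟩
            (⟨hpΦ, hpβ'⟩ : p ∈ Φ x ∩ Iio β)) (not_le_of_gt hsp)
      have hβP : β ∈ P := ⟨by rw [hss]; exact hβδ,
        pos_iff_ne_zero.mpr hβ0, hβsup⟩
      have hβΦ : β ∈ Φ x := hcl β hβδ hβP.2.1 hβsup
      have hcohβ := hcoh β ⟨hβΦ, hβP⟩
      refine ⟨β, hβα, t, htfin, htsub, ?_⟩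
      rw [if_neg hβ0, ← hcohβ]
      ext z
      simp only [htdef, Set.mem_union, Set.mem_inter_iff, Set.mem_diff, Set.mem_Iio]
      constructor
      · rintro ⟨hzΦ, hzα⟩
        by_cases h : z < β
        · exact Or.inl ⟨hzΦ, h⟩
        · exact Or.inr ⟨⟨hzΦ, hzα⟩, h⟩
      · rintro (⟨hzΦ, hzβ⟩ | ⟨⟨hzΦ, hzα⟩, _⟩)
        · exact ⟨hzΦ, lt_of_lt_of_le hzβ hβα⟩
        · exact ⟨hzΦ, hzα⟩

/-- postprocessing functions preserve weak coherence of C-sequences. -/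
theorem statement15 (κ : Cardinal.{0}) (hκ : κ.IsRegular) (hκ1 : Cardinal.aleph0 < κ)
    (Φ : Set O → Set O) (hΦ : IsPP κ.ord Φ)
    (C : O → Set O)
    (hC : ∀ δ : O, δ < κ.ord → Order.IsSuccLimit δ → IsClubIn (C δ) δ)
    (hwc : ∀ α < κ.ord,
      Cardinal.mk ↥((fun δ => C δ ∩ Iio α) '' Iio κ.ord) < Cardinal.lift.{1} κ) :
    ∀ α < κ.ord,
      Cardinal.mk ↥((fun δ => Φ (C δ) ∩ Iio α) '' {δ : O | δ < κ.ord ∧ Order.IsSuccLimit δ})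
        < Cardinal.lift.{1} κ := by
  intro α hα
  have hℵ : Cardinal.aleph0 ≤ κ := hκ1.le
  have hord : Order.IsSuccLimit κ.ord := Cardinal.isSuccLimit_ord hℵ
  have hℵlift' : Cardinal.aleph0 < Cardinal.lift.{1} κ := Cardinal.aleph0_lt_lift.mpr hκ1
  have hℵlift : Cardinal.aleph0 ≤ Cardinal.lift.{1} κ := hℵlift'.le
  -- key decomposition for each limit δ > α
  have hKey : ∀ δ, δ < κ.ord → Order.IsSuccLimit δ → α < δ →
      ∃ β ≤ α, ∃ t : Set O, t.Finite ∧ t ⊆ Iio α ∧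
        Φ (C δ) ∩ Iio α = (if β = 0 then ∅ else Φ (C δ ∩ Iio β)) ∪ t := by
    intro δ hδκ hδlim hαδ
    obtain ⟨hsubC, hunbC, hclC⟩ := hC δ hδκ hδlim
    have hbddC : BddAbove (C δ) := ⟨δ, fun b hb => (hsubC hb).le⟩
    have hCne : (C δ).Nonempty := by
      obtain ⟨b, hb, -, -⟩ := hunbC 0 hδlim.bot_lt
      exact ⟨b, hb⟩
    have hsupC : sSup (C δ) = δ := by
      apply le_antisymm (csSup_le' fun b hb => (hsubC hb).le)
      apply le_of_forall_lt
      intro γ hγ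
      obtain ⟨b, hb, h1, -⟩ := hunbC γ hγ
      exact lt_of_lt_of_le h1 (le_csSup hbddC hb)
    have hssC : ssup (C δ) ≤ δ := by
      apply csSup_le'
      rintro b ⟨c, hc, rfl⟩
      exact (Ordinal.add_one_eq_succ c ▸ (hδlim.succ_lt (hsubC hc))).le
    have hK : Kset κ.ord (C δ) := by
      refine ⟨hCne, fun z hz => lt_trans (hsubC hz) hδκ, ?_, ?_⟩
      · intro γ hγ
        exact hclC γ (lt_of_lt_of_le hγ.1 hssC) hγ.2.1 hγ.2.2
      · rw [hsupC]
        exact fun h => lt_irrefl δ (hsubC h)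
    obtain ⟨hclub, -, hcoh⟩ := hΦ (C δ) hK
    rw [hsupC] at hclub
    have hbddS : BddAbove ((· + 1) '' Φ (C δ)) := by
      refine ⟨δ, ?_⟩
      rintro b ⟨c, hc, rfl⟩
      exact (Ordinal.add_one_eq_succ c ▸ (hδlim.succ_lt (hclub.1 hc))).le
    have hss : ssup (Φ (C δ)) = δ := by
      apply le_antisymm
      · apply csSup_le'
        rintro b ⟨c, hc, rfl⟩
        exact (Ordinal.add_one_eq_succ c ▸ (hδlim.succ_lt (hclub.1 hc))).le
      · apply le_of_forall_lt
        intro γ hγ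
        obtain ⟨b, hb, h1, -⟩ := hclub.2.1 γ hγ
        have hb1 : b + 1 ≤ ssup (Φ (C δ)) := le_csSup hbddS ⟨b, hb, rfl⟩
        have hbb : b < b + 1 := Ordinal.add_one_eq_succ b ▸ Order.lt_succ b
        exact lt_of_lt_of_le (lt_trans h1 hbb) hb1
    exact key_decomp Φ (C δ) δ α hαδ hclub hss hcoh
  -- cardinality bookkeeping
  set A := (fun δ => C δ ∩ Iio α) '' Iio κ.ord with hAdef
  set T := {t : Set O | t.Finite ∧ t ⊆ Iio α} with hTdef
  set F : Set O × O × Set O → Set O :=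
    fun p => (if p.2.1 = 0 then ∅ else Φ (p.1 ∩ Iio p.2.1)) ∪ p.2.2 with hFdef
  set S1 := (fun δ => Φ (C δ) ∩ Iio α) '' Iic α with hS1def
  set S2 := F '' (A ×ˢ (Iic α ×ˢ T)) with hS2def
  have hsubS : (fun δ => Φ (C δ) ∩ Iio α) '' {δ : O | δ < κ.ord ∧ Order.IsSuccLimit δ} ⊆ S1 ∪ S2 := by
    rintro y ⟨δ, ⟨hδκ, hδlim⟩, rfl⟩
    by_cases hδα : δ ≤ α
    · exact Or.inl ⟨δ, hδα, rfl⟩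
    · push_neg at hδα
      obtain ⟨β, hβα, t, htfin, htsub, heq⟩ := hKey δ hδκ hδlim hδα
      refine Or.inr ⟨(C δ ∩ Iio α, β, t), ⟨⟨δ, hδκ, rfl⟩, hβα, htfin, htsub⟩, ?_⟩
      show (if β = 0 then ∅ else Φ ((C δ ∩ Iio α) ∩ Iio β)) ∪ t = Φ (C δ) ∩ Iio α
      have hint : (C δ ∩ Iio α) ∩ Iio β = C δ ∩ Iio β := by
        rw [Set.inter_assoc, Set.Iio_inter_Iio, min_eq_right hβα]
      rw [hint, ← heq]
  -- small pieces
  have hIic : Cardinal.mk ↥(Iic α : Set O) < Cardinal.lift.{1} κ := by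
    have hIicIio : (Iic α : Set O) = Iio (α + 1) := by
      rw [Ordinal.add_one_eq_succ, Order.Iio_succ]
    rw [hIicIio, Ordinal.mk_Iio_ordinal, Cardinal.lift_lt, ← Cardinal.lt_ord]
    exact Ordinal.add_one_eq_succ α ▸ hord.succ_lt hα
  have hIio : Cardinal.mk ↥(Iio α : Set O) < Cardinal.lift.{1} κ := by
    rw [Ordinal.mk_Iio_ordinal, Cardinal.lift_lt, ← Cardinal.lt_ord]
    exact hα
  -- finite subsets of Iio α
  have hT : Cardinal.mk ↥T < Cardinal.lift.{1} κ := by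
    have hgmem : ∀ l : List ↥(Iio α : Set O), (Subtype.val '' {z | z ∈ l}) ∈ T := by
      intro l
      refine ⟨(l.finite_toSet).image _, ?_⟩
      rintro z ⟨w, -, rfl⟩
      exact w.2
    have hsurj : Function.Surjective (fun l : List ↥(Iio α : Set O) =>
        (⟨Subtype.val '' {z | z ∈ l}, hgmem l⟩ : ↥T)) := by
      rintro ⟨t, htfin, htsub⟩
      have hpre : (Subtype.val ⁻¹' t : Set ↥(Iio α : Set O)).Finite :=
        htfin.preimage Subtype.val_injective.injOn
      refine ⟨hpre.toFinset.toList, ?_⟩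
      apply Subtype.ext
      show Subtype.val '' {z | z ∈ hpre.toFinset.toList} = t
      ext z
      simp only [Set.mem_image, Set.mem_setOf_eq, Finset.mem_toList,
        Set.Finite.mem_toFinset, Set.mem_preimage]
      constructor
      · rintro ⟨w, hw, rfl⟩
        exact hw
      · intro hz
        exact ⟨⟨z, htsub hz⟩, hz, rfl⟩
    have h1 : Cardinal.mk ↥T ≤ Cardinal.mk (List ↥(Iio α : Set O)) :=
      Cardinal.mk_le_of_surjective hsurj
    have h2 := Cardinal.mk_list_le_max ↥(Iio α : Set O)
    exact lt_of_le_of_lt (h1.trans h2) (max_lt hℵlift' hIio)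
  -- S1 is small
  have hS1 : Cardinal.mk ↥S1 < Cardinal.lift.{1} κ :=
    lt_of_le_of_lt Cardinal.mk_image_le hIic
  -- S2 is small
  have hS2 : Cardinal.mk ↥S2 < Cardinal.lift.{1} κ := by
    have eP : Cardinal.mk ↥(Iic α ×ˢ T) =
        Cardinal.mk ↥(Iic α : Set O) * Cardinal.mk ↥T := by
      rw [Cardinal.mk_congr (Equiv.Set.prod _ _), Cardinal.mk_prod,
        Cardinal.lift_id, Cardinal.lift_id]
    have eA : Cardinal.mk ↥(A ×ˢ (Iic α ×ˢ T)) =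
        Cardinal.mk ↥A * Cardinal.mk ↥(Iic α ×ˢ T) := by
      rw [Cardinal.mk_congr (Equiv.Set.prod _ _), Cardinal.mk_prod,
        Cardinal.lift_id, Cardinal.lift_id]
    refine lt_of_le_of_lt Cardinal.mk_image_le ?_
    rw [eA, eP]
    exact Cardinal.mul_lt_of_lt hℵlift (hwc α hα)
      (Cardinal.mul_lt_of_lt hℵlift hIic hT)
  calc Cardinal.mk ↥((fun δ => Φ (C δ) ∩ Iio α) '' {δ : O | δ < κ.ord ∧ Order.IsSuccLimit δ})
      ≤ Cardinal.mk ↥(S1 ∪ S2) := Cardinal.mk_le_mk_of_subset hsubS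
    _ ≤ Cardinal.mk ↥S1 + Cardinal.mk ↥S2 := Cardinal.mk_union_le _ _
    _ < Cardinal.lift.{1} κ := Cardinal.add_lt_of_lt hℵlift hS1 hS2
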